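/- For the problem of maximizing f(x,z) = 2z − x over F_m = {(x,z) : z ≤ 2x, z ≤ 2(1−x), x ∈ (1/m)ℤ, x ≥ 0, z ∈ {0,1}}: if m is even, the unique maximizer is (1/2, 1) with value 3/2; if m is odd, the unique maximizer is (0,0) with value 0. -/

import Mathlib

/-- Grid approximations of the example: for even `m` the unique maximizer of
`2z − x` over `F_m` is `(1/2,1)` (value `3/2`); for odd `m` it is `(0,0)`
(value `0`). -/
theorem example_grid_maximizers
    (m : ℕ) (hm : 0 < m) (Fm : Set (ℝ × ℤ))
    (hFm : Fm = {p : ℝ × ℤ | (p.2 : ℝ) ≤ 2 * p.1 ∧ (p.2 : ℝ) ≤ 2 * (1 - p.1) ∧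
      (∃ n : ℤ, p.1 = (n : ℝ) / m) ∧ 0 ≤ p.1 ∧ (p.2 = 0 ∨ p.2 = 1)}) :
    (Even m →
      ((1 / 2, 1) ∈ Fm ∧ 2 * ((1 : ℤ) : ℝ) - 1 / 2 = 3 / 2 ∧
        ∀ q ∈ Fm, q ≠ ((1 : ℝ) / 2, (1 : ℤ)) →
          2 * (q.2 : ℝ) - q.1 < 3 / 2)) ∧
    (Odd m →
      ((0, 0) ∈ Fm ∧
        ∀ q ∈ Fm, q ≠ ((0 : ℝ), (0 : ℤ)) → 2 * (q.2 : ℝ) - q.1 < 0)) := by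
  have hm0 : (m : ℝ) ≠ 0 := Nat.cast_ne_zero.mpr hm.ne'
  subst hFm
  constructor
  · rintro ⟨k, hk⟩
    have hmk : (m : ℝ) = 2 * k := by
      have : m = 2 * k := by omega
      exact_mod_cast this
    refine ⟨⟨by norm_num, by norm_num, ⟨k, ?_⟩, by norm_num, Or.inr rfl⟩, by norm_num, ?_⟩
    · rw [hmk]
      have hk0 : (k : ℝ) ≠ 0 := Nat.cast_ne_zero.mpr (by omega)
      field_simp
      norm_cast
    · rintro ⟨x, z⟩ ⟨h1, h2, ⟨n, hn⟩, hx0, hz⟩ hne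
      rcases hz with rfl | rfl
      · push_cast at *; linarith
      · exfalso
        apply hne
        have hx : x = 1 / 2 := by push_cast at h1 h2; linarith
        simp [hx]
  · rintro ⟨k, hk⟩
    refine ⟨⟨by norm_num, by norm_num, ⟨0, by simp⟩, le_refl _, Or.inl rfl⟩, ?_⟩
    rintro ⟨x, z⟩ ⟨h1, h2, ⟨n, hn⟩, hx0, hz⟩ hne
    rcases hz with rfl | rfl
    · have hx : x ≠ 0 := by
        intro h; exact hne (by simp [h])
      have : 0 < x := lt_of_le_of_ne hx0 (Ne.symm hx)
      push_cast; linarith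
    · exfalso
      have hx : x = 1 / 2 := by push_cast at h1 h2; linarith
      simp only at hn
      rw [hn] at hx
      have h2n : (2 * n : ℝ) = m := by field_simp at hx; linarith
      have : 2 * n = (m : ℤ) := by exact_mod_cast h2n
      omega
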